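/- Let T : ℝ^N × ℝ → ℝ^N be continuously differentiable, let Y : [0, ∞) → ℝ^N and s : [0, ∞) → ℝ be differentiable, and let ε_T > 0. Suppose that for each τ ≥ 0 the partial Jacobian K(τ) := ∇_Y T(Y(τ), s(τ)) ∈ ℝ^{N×N} is invertible and the trajectory satisfies the Newton-flow differential equation Y'(τ) = −K(τ)⁻¹·( ε_T·T(Y(τ), s(τ)) + ∇_s T(Y(τ), s(τ))·s'(τ) ). Then the KKT residual decays exponentially at exact rate ε_T: ‖T(Y(τ), s(τ))‖ = e^{−ε_T·τ}·‖T(Y(0), s(0))‖ for all τ ≥ 0. -/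

import Mathlib

/-- along the fictitious-time Newton flow
`Y'(τ) = −K(τ)⁻¹·(ε_T·T(Y(τ), s(τ)) + ∇_s T(Y(τ), s(τ))·s'(τ))`, with
`K(τ) = ∇_Y T(Y(τ), s(τ))` invertible, the KKT residual decays exponentially at exact
rate `ε_T`: `‖T(Y(τ), s(τ))‖ = e^{−ε_T τ}·‖T(Y(0), s(0))‖` for all `τ ≥ 0`. -/
theorem stmt13 {N : ℕ}
    (T : EuclideanSpace ℝ (Fin N) → ℝ → EuclideanSpace ℝ (Fin N))
    (hT : ContDiff ℝ 1 (fun p : EuclideanSpace ℝ (Fin N) × ℝ => T p.1 p.2))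
    (Y : ℝ → EuclideanSpace ℝ (Fin N)) (s s' : ℝ → ℝ)
    (hs : ∀ τ : ℝ, 0 ≤ τ → HasDerivAt s (s' τ) τ)
    (εT : ℝ) (hεT : 0 < εT)
    (hflow : ∀ τ : ℝ, 0 ≤ τ →
      ∃ Kτ : EuclideanSpace ℝ (Fin N) ≃L[ℝ] EuclideanSpace ℝ (Fin N),
        (Kτ : EuclideanSpace ℝ (Fin N) →L[ℝ] EuclideanSpace ℝ (Fin N)) =
          fderiv ℝ (fun Z => T Z (s τ)) (Y τ) ∧
        HasDerivAt Y
          (-(Kτ.symm (εT • T (Y τ) (s τ) + s' τ • deriv (fun σ => T (Y τ) σ) (s τ)))) τ) :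
    ∀ τ : ℝ, 0 ≤ τ →
      ‖T (Y τ) (s τ)‖ = Real.exp (-εT * τ) * ‖T (Y 0) (s 0)‖ := by
  set F : EuclideanSpace ℝ (Fin N) × ℝ → EuclideanSpace ℝ (Fin N) := fun p => T p.1 p.2 with hF
  have hdF : Differentiable ℝ F := hT.differentiable one_ne_zero
  set v : ℝ → EuclideanSpace ℝ (Fin N) := fun τ => T (Y τ) (s τ) with hv
  have key : ∀ τ : ℝ, 0 ≤ τ → HasDerivAt v (-(εT • v τ)) τ := by
    intro τ hτ
    obtain ⟨K, hK, hY⟩ := hflow τ hτ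
    have hFd : HasFDerivAt F (fderiv ℝ F (Y τ, s τ)) (Y τ, s τ) := (hdF _).hasFDerivAt
    set φ := fderiv ℝ F (Y τ, s τ) with hφ
    have h1 : HasFDerivAt (fun Z => T Z (s τ))
        (φ.comp (ContinuousLinearMap.inl ℝ (EuclideanSpace ℝ (Fin N)) ℝ)) (Y τ) := by
      have hg : HasFDerivAt (fun Z : EuclideanSpace ℝ (Fin N) => (Z, s τ))
          (ContinuousLinearMap.inl ℝ (EuclideanSpace ℝ (Fin N)) ℝ) (Y τ) :=
        (hasFDerivAt_id _).prodMk (hasFDerivAt_const _ _)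
      exact hFd.comp (Y τ) hg
    have h2 : HasDerivAt (fun σ => T (Y τ) σ) (φ (0, 1)) (s τ) := by
      have hg : HasDerivAt (fun σ : ℝ => ((Y τ), σ))
          ((0 : EuclideanSpace ℝ (Fin N)), (1 : ℝ)) (s τ) :=
        (hasDerivAt_const _ _).prodMk (hasDerivAt_id _)
      exact hFd.comp_hasDerivAt _ hg
    have hKφ : ∀ x, K x = φ (x, 0) := by
      intro x
      have : (K : EuclideanSpace ℝ (Fin N) →L[ℝ] EuclideanSpace ℝ (Fin N)) =
          φ.comp (ContinuousLinearMap.inl ℝ (EuclideanSpace ℝ (Fin N)) ℝ) := by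
        rw [hK, h1.fderiv]
      calc K x = ((K : EuclideanSpace ℝ (Fin N) →L[ℝ] EuclideanSpace ℝ (Fin N))) x := rfl
        _ = (φ.comp (ContinuousLinearMap.inl ℝ (EuclideanSpace ℝ (Fin N)) ℝ)) x := by rw [this]
        _ = φ (x, 0) := rfl
    have hderiv2 : deriv (fun σ => T (Y τ) σ) (s τ) = φ (0, 1) := h2.deriv
    set w : EuclideanSpace ℝ (Fin N) :=
      εT • T (Y τ) (s τ) + s' τ • deriv (fun σ => T (Y τ) σ) (s τ) with hw
    have hYs : HasDerivAt (fun t => (Y t, s t)) (-(K.symm w), s' τ) τ := hY.prodMk (hs τ hτ)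
    have hvd : HasDerivAt v (φ (-(K.symm w), s' τ)) τ := by have := hFd.comp_hasDerivAt τ hYs; exact this
    have hsplit : φ (-(K.symm w), s' τ) = -(εT • v τ) := by
      have e1 : ((-(K.symm w), s' τ) : EuclideanSpace ℝ (Fin N) × ℝ) =
          (-(K.symm w), 0) + s' τ • ((0 : EuclideanSpace ℝ (Fin N)), (1 : ℝ)) := by
        simp [Prod.ext_iff]
      rw [e1, map_add, map_smul]
      have e2 : φ (-(K.symm w), 0) = K (-(K.symm w)) := (hKφ _).symm
      rw [e2]
      have e3 : K (-(K.symm w)) = -w := by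
        rw [map_neg, K.apply_symm_apply]
      rw [e3, hw, hderiv2]
      abel
    rw [hsplit] at hvd
    exact hvd
  intro τ hτ
  set g : ℝ → EuclideanSpace ℝ (Fin N) := fun t => Real.exp (εT * t) • v t with hg
  have hgderiv : ∀ x : ℝ, 0 ≤ x → HasDerivAt g 0 x := by
    intro x hx
    have h1 : HasDerivAt (fun t : ℝ => Real.exp (εT * t)) (εT * Real.exp (εT * x)) x := by
      have := (Real.hasDerivAt_exp (εT * x)).comp x ((hasDerivAt_id x).const_mul εT)
      simpa [mul_comm, Function.comp_def] using this
    have := h1.smul (key x hx)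
    simp only [smul_neg, smul_smul] at this
    refine this.congr_deriv ?_
    module
  have hconst : g τ = g 0 := by
    have hcont : ContinuousOn g (Set.Icc 0 τ) := fun x hx =>
      ((hgderiv x hx.1).continuousAt).continuousWithinAt
    have := constant_of_has_deriv_right_zero hcont (fun x hx =>
      ((hgderiv x hx.1).hasDerivWithinAt))
    exact this τ (Set.right_mem_Icc.2 hτ)
  have hvτ : v τ = Real.exp (-εT * τ) • v 0 := by
    have h0 : g 0 = v 0 := by simp [hg]
    have hτ' : Real.exp (εT * τ) • v τ = v 0 := by rw [← h0, ← hconst]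
    have := congrArg (fun z => Real.exp (-εT * τ) • z) hτ'
    simpa [smul_smul, ← Real.exp_add, neg_mul] using this
  calc ‖T (Y τ) (s τ)‖ = ‖v τ‖ := rfl
    _ = ‖Real.exp (-εT * τ) • v 0‖ := by rw [hvτ]
    _ = Real.exp (-εT * τ) * ‖v 0‖ := by
        rw [norm_smul, Real.norm_eq_abs, abs_of_pos (Real.exp_pos _)]
    _ = Real.exp (-εT * τ) * ‖T (Y 0) (s 0)‖ := rfl
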